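/- Given a negative definite function r² on a set P (i.e., ∑_{n,m} c_n c_m r²(p_n, p_m) ≤ 0 whenever ∑ c_n = 0) with r² ≥ 0 and r²(p,p) = 0, the function r (its nonnegative square root) is also negative definite. -/

import Mathlib

open Finset MeasureTheory Set

section Helpers

/-- entrywise (Schur) product of two PSD quadratic forms is PSD -/
lemma qf_hadamard {N : ℕ} {B B' : Fin N → Fin N → ℝ}
    (hsB : ∀ n m, B n m = B m n)
    (hB : ∀ c : Fin N → ℝ, 0 ≤ ∑ n, ∑ m, c n * c m * B n m)
    (hB' : ∀ c : Fin N → ℝ, 0 ≤ ∑ n, ∑ m, c n * c m * B' n m)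
    (c : Fin N → ℝ) : 0 ≤ ∑ n, ∑ m, c n * c m * (B n m * B' n m) := by
  have hps : (Matrix.of B).PosSemidef := by
    refine Matrix.PosSemidef.of_dotProduct_mulVec_nonneg ?_ ?_
    · ext i j
      simp [Matrix.conjTranspose_apply, hsB j i]
    · intro x
      have := hB x
      simp only [dotProduct, Matrix.mulVec, dotProduct, star_trivial,
        Matrix.of_apply]
      calc (0:ℝ) ≤ ∑ n, ∑ m, x n * x m * B n m := hB x
        _ = ∑ n, x n * ∑ m, B n m * x m := by
            refine Finset.sum_congr rfl fun n _ => ?_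
            rw [Finset.mul_sum]
            exact Finset.sum_congr rfl fun m _ => by ring
  obtain ⟨K, A, hA⟩ := Matrix.posSemidef_iff_eq_sum_vecMulVec.mp hps
  have hBnm : ∀ n m, B n m = ∑ k, A k n * A k m := by
    intro n m
    have := congrFun (congrFun hA n) m
    simpa [Matrix.sum_apply, Matrix.vecMulVec_apply] using this
  calc (0:ℝ) ≤ ∑ k, ∑ n, ∑ m, (c n * A k n) * (c m * A k m) * B' n m :=
        Finset.sum_nonneg fun k _ => hB' _
    _ = ∑ n, ∑ m, c n * c m * (B n m * B' n m) := by
        rw [Finset.sum_comm]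
        refine Finset.sum_congr rfl fun n _ => ?_
        rw [Finset.sum_comm]
        refine Finset.sum_congr rfl fun m _ => ?_
        rw [hBnm, Finset.sum_mul, Finset.mul_sum]
        exact Finset.sum_congr rfl fun k _ => by ring

lemma real_exp_tsum (x : ℝ) : Real.exp x = ∑' j : ℕ, x ^ j / j.factorial := by
  rw [Real.exp_eq_exp_ℝ, NormedSpace.exp_eq_tsum_div]

lemma qf_pow {N : ℕ} {B : Fin N → Fin N → ℝ}
    (hsB : ∀ n m, B n m = B m n)
    (hB : ∀ c : Fin N → ℝ, 0 ≤ ∑ n, ∑ m, c n * c m * B n m) (j : ℕ)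
    (c : Fin N → ℝ) : 0 ≤ ∑ n, ∑ m, c n * c m * B n m ^ j := by
  induction j generalizing c with
  | zero =>
    simp only [pow_zero, mul_one]
    have : ∑ n, ∑ m, c n * c m = (∑ n, c n) * (∑ m, c m) := by
      rw [Finset.sum_mul]
      exact Finset.sum_congr rfl fun n _ => by rw [Finset.mul_sum]
    rw [this]
    exact mul_self_nonneg _
  | succ j ih =>
    have := qf_hadamard hsB hB (fun c => ih c) c
    simpa [pow_succ, mul_comm] using qf_hadamard (fun n m => by rw [hsB])
      (fun c => ih c) hB c

lemma qf_exp {N : ℕ} {B : Fin N → Fin N → ℝ}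
    (hsB : ∀ n m, B n m = B m n)
    (hB : ∀ c : Fin N → ℝ, 0 ≤ ∑ n, ∑ m, c n * c m * B n m)
    (c : Fin N → ℝ) : 0 ≤ ∑ n, ∑ m, c n * c m * Real.exp (B n m) := by
  have hsum : ∀ n m : Fin N, Summable (fun j : ℕ => c n * c m * (B n m ^ j / j.factorial)) :=
    fun n m => (Real.summable_pow_div_factorial (B n m)).mul_left _
  have key : ∑ n, ∑ m, c n * c m * Real.exp (B n m)
      = ∑' j : ℕ, ∑ n, ∑ m, c n * c m * (B n m ^ j / j.factorial) := by
    have e1 : ∀ n m : Fin N, c n * c m * Real.exp (B n m)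
        = ∑' j : ℕ, c n * c m * (B n m ^ j / j.factorial) := fun n m => by
      rw [real_exp_tsum, ← tsum_mul_left]
    have e2 : ∀ n : Fin N, ∑ m, ∑' j : ℕ, c n * c m * (B n m ^ j / j.factorial)
        = ∑' j : ℕ, ∑ m, c n * c m * (B n m ^ j / j.factorial) := fun n =>
      (Summable.tsum_finsetSum fun m _ => hsum n m).symm
    simp_rw [e1, e2]
    exact (Summable.tsum_finsetSum fun n _ => summable_sum fun m _ => hsum n m).symm
  rw [key]
  refine tsum_nonneg fun j => ?_
  have := qf_pow hsB hB j c
  have h2 : ∑ n, ∑ m, c n * c m * (B n m ^ j / (j.factorial : ℝ))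
      = (∑ n, ∑ m, c n * c m * B n m ^ j) / j.factorial := by
    rw [Finset.sum_div]
    refine Finset.sum_congr rfl fun n _ => ?_
    rw [Finset.sum_div]
    exact Finset.sum_congr rfl fun m _ => by ring
  rw [h2]
  positivity

noncomputable def Faux : ℝ → ℝ := fun t => (1 - Real.exp (-t)) * t ^ (-(3/2) : ℝ)

lemma meas_aux (x : ℝ) (s : Set ℝ) (hs : MeasurableSet s) (hs' : s ⊆ Ioi 0) :
    AEStronglyMeasurable (fun t : ℝ => (1 - Real.exp (-(t * x))) * t ^ (-(3/2) : ℝ))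
      (volume.restrict s) := by
  refine AEStronglyMeasurable.mul ?_ ?_
  · exact (continuous_const.sub (Real.continuous_exp.comp
      ((continuous_id.mul continuous_const).neg))).aestronglyMeasurable
  · refine (continuousOn_of_forall_continuousAt fun t ht => ?_).aestronglyMeasurable hs
    exact Real.continuousAt_rpow_const _ _ (Or.inl (ne_of_gt (hs' ht)))

lemma Faux_meas (s : Set ℝ) (hs : MeasurableSet s) (hs' : s ⊆ Ioi 0) :
    AEStronglyMeasurable Faux (volume.restrict s) := by
  have := meas_aux 1 s hs hs'
  unfold Faux
  simpa using this

lemma Faux_nonneg {t : ℝ} (ht : 0 < t) : 0 ≤ Faux t := by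
  apply mul_nonneg
  · have : Real.exp (-t) ≤ 1 := Real.exp_le_one_iff.mpr (by linarith)
    linarith
  · exact Real.rpow_nonneg ht.le _

lemma Faux_int : IntegrableOn Faux (Ioi 0) := by
  rw [← Ioc_union_Ioi_eq_Ioi (zero_le_one : (0:ℝ) ≤ 1)]
  refine IntegrableOn.union ?_ ?_
  · have hg : IntegrableOn (fun t : ℝ => t ^ (-(1/2) : ℝ)) (Ioc 0 1) := by
      rw [← intervalIntegrable_iff_integrableOn_Ioc_of_le zero_le_one]
      exact intervalIntegral.intervalIntegrable_rpow' (by norm_num)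
    refine Integrable.mono hg (Faux_meas _ measurableSet_Ioc fun t ht => ht.1) ?_
    refine (ae_restrict_iff' measurableSet_Ioc).mpr (Filter.Eventually.of_forall fun t ht => ?_)
    have ht0 : 0 < t := ht.1
    rw [Real.norm_of_nonneg (Real.rpow_nonneg ht0.le _),
      Real.norm_of_nonneg (Faux_nonneg ht0)]
    have h1 : 1 - Real.exp (-t) ≤ t := by nlinarith [Real.add_one_le_exp (-t)]
    have h2 : (0:ℝ) ≤ t ^ (-(3/2) : ℝ) := Real.rpow_nonneg ht0.le _
    have h3 : Faux t ≤ t * t ^ (-(3/2) : ℝ) := mul_le_mul_of_nonneg_right h1 h2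
    have h4 : t * t ^ (-(3/2) : ℝ) = t ^ (-(1/2) : ℝ) := by
      nth_rewrite 1 [← Real.rpow_one t]
      rw [← Real.rpow_add ht0]
      norm_num
    linarith
  · have hg := integrableOn_Ioi_rpow_of_lt (show (-(3/2) : ℝ) < -1 by norm_num) one_pos
    refine Integrable.mono hg (Faux_meas _ measurableSet_Ioi
      (Ioi_subset_Ioi zero_le_one)) ?_
    refine (ae_restrict_iff' measurableSet_Ioi).mpr (Filter.Eventually.of_forall fun t ht => ?_)
    have ht0 : (0:ℝ) < t := lt_trans one_pos ht
    rw [Real.norm_of_nonneg (Real.rpow_nonneg ht0.le _),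
      Real.norm_of_nonneg (Faux_nonneg ht0)]
    have h1 : 1 - Real.exp (-t) ≤ 1 := by nlinarith [Real.exp_pos (-t)]
    have h2 : (0:ℝ) ≤ t ^ (-(3/2) : ℝ) := Real.rpow_nonneg ht0.le _
    calc Faux t ≤ 1 * t ^ (-(3/2) : ℝ) := mul_le_mul_of_nonneg_right h1 h2
      _ = t ^ (-(3/2) : ℝ) := one_mul _

noncomputable def Iconst : ℝ := ∫ t in Ioi (0:ℝ), Faux t

lemma Iconst_pos : 0 < Iconst := by
  have hnn : 0 ≤ᵐ[volume.restrict (Ioi (0:ℝ))] Faux :=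
    (ae_restrict_iff' measurableSet_Ioi).mpr
      (Filter.Eventually.of_forall fun t ht => Faux_nonneg ht)
  rw [Iconst, setIntegral_pos_iff_support_of_nonneg_ae hnn Faux_int]
  have hsup : Ioi (0:ℝ) ⊆ Function.support Faux ∩ Ioi 0 := by
    intro t ht
    refine ⟨?_, ht⟩
    have ht0 : (0:ℝ) < t := ht
    have h1 : Real.exp (-t) < 1 := Real.exp_lt_one_iff.mpr (by linarith)
    have h2 : (0:ℝ) < t ^ (-(3/2) : ℝ) := Real.rpow_pos_of_pos ht0 _
    have : 0 < Faux t := mul_pos (by linarith) h2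
    exact ne_of_gt this
  calc (0:ENNReal) < volume (Ioi (0:ℝ)) := by rw [Real.volume_Ioi]; exact ENNReal.zero_lt_top
    _ ≤ volume (Function.support Faux ∩ Ioi 0) := by
        exact measure_mono hsup

lemma int_aux {x : ℝ} (hx : 0 ≤ x) :
    IntegrableOn (fun t : ℝ => (1 - Real.exp (-(t * x))) * t ^ (-(3/2) : ℝ)) (Ioi 0) := by
  rcases eq_or_lt_of_le hx with rfl | hx'
  · have : (fun t : ℝ => (1 - Real.exp (-(t * 0))) * t ^ (-(3/2) : ℝ)) = fun _ => (0:ℝ) := by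
      funext t; simp
    rw [this]
    exact integrableOn_zero
  · have h1 : IntegrableOn (fun t : ℝ => Faux (x * t)) (Ioi 0) := by
      have := (integrableOn_Ioi_comp_mul_left_iff Faux 0 hx').mpr
      rw [mul_zero] at this
      exact this Faux_int
    have h2 : IntegrableOn (fun t : ℝ => x ^ ((3:ℝ)/2) * Faux (x * t)) (Ioi 0) :=
      h1.const_mul _
    refine h2.congr_fun (fun t ht => ?_) measurableSet_Ioi
    have ht0 : (0:ℝ) < t := ht
    show x ^ ((3:ℝ)/2) * Faux (x * t) = (1 - Real.exp (-(t * x))) * t ^ (-(3/2) : ℝ)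
    rw [Faux]
    show x ^ ((3:ℝ)/2) * ((1 - Real.exp (-(x * t))) * (x * t) ^ (-(3/2) : ℝ)) = _
    rw [Real.mul_rpow hx'.le ht0.le, mul_comm x t]
    have hxx : x ^ ((3:ℝ)/2) * x ^ (-(3/2) : ℝ) = 1 := by
      rw [← Real.rpow_add hx']
      norm_num
    calc x ^ ((3:ℝ)/2) * ((1 - Real.exp (-(t * x))) * (x ^ (-(3/2):ℝ) * t ^ (-(3/2):ℝ)))
        = (x ^ ((3:ℝ)/2) * x ^ (-(3/2):ℝ)) * ((1 - Real.exp (-(t * x))) * t ^ (-(3/2):ℝ)) := by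
          ring
      _ = (1 - Real.exp (-(t * x))) * t ^ (-(3/2) : ℝ) := by rw [hxx, one_mul]

lemma scale {x : ℝ} (hx : 0 ≤ x) :
    ∫ t in Ioi (0:ℝ), (1 - Real.exp (-(t * x))) * t ^ (-(3/2) : ℝ)
      = Real.sqrt x * Iconst := by
  rcases eq_or_lt_of_le hx with rfl | hx'
  · simp
  · have key : EqOn (fun t : ℝ => (1 - Real.exp (-(t * x))) * t ^ (-(3/2) : ℝ))
        (fun t : ℝ => x ^ ((3:ℝ)/2) * Faux (x * t)) (Ioi 0) := by
      intro t ht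
      have ht0 : (0:ℝ) < t := ht
      show (1 - Real.exp (-(t * x))) * t ^ (-(3/2) : ℝ) = x ^ ((3:ℝ)/2) * Faux (x * t)
      rw [Faux]
      show _ = x ^ ((3:ℝ)/2) * ((1 - Real.exp (-(x * t))) * (x * t) ^ (-(3/2) : ℝ))
      rw [Real.mul_rpow hx'.le ht0.le, mul_comm x t]
      have hxx : x ^ ((3:ℝ)/2) * x ^ (-(3/2) : ℝ) = 1 := by
        rw [← Real.rpow_add hx']
        norm_num
      calc (1 - Real.exp (-(t * x))) * t ^ (-(3/2) : ℝ)
          = (x ^ ((3:ℝ)/2) * x ^ (-(3/2):ℝ)) * ((1 - Real.exp (-(t * x))) * t ^ (-(3/2):ℝ)) := by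
            rw [hxx, one_mul]
        _ = x ^ ((3:ℝ)/2) * ((1 - Real.exp (-(t * x))) * (x ^ (-(3/2):ℝ) * t ^ (-(3/2):ℝ))) := by
            ring
    rw [setIntegral_congr_fun measurableSet_Ioi key]
    rw [integral_const_mul]
    rw [integral_comp_mul_left_Ioi Faux 0 hx', mul_zero]
    rw [smul_eq_mul, ← Iconst, Real.sqrt_eq_rpow, ← mul_assoc]
    congr 1
    rw [← Real.rpow_neg_one x, ← Real.rpow_add hx']
    norm_num

end Helpers

/-- A symmetric function `d : P × P → ℝ` is negative definite if for all finite families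
and coefficients summing to zero the quadratic form is nonpositive. -/
def IsNegDef {P : Type*} (d : P → P → ℝ) : Prop :=
  ∀ (N : ℕ) (p : Fin N → P) (c : Fin N → ℝ), ∑ n, c n = 0 →
    ∑ n, ∑ m, c n * c m * d (p n) (p m) ≤ 0

section Helpers2

lemma qf_exp_neg_d {P : Type*} {d : P → P → ℝ}
    (hsymm : ∀ p q, d p q = d q p) (hdiag : ∀ p, d p p = 0) (hnd : IsNegDef d)
    {N : ℕ} (p : Fin N → P) {t : ℝ} (ht : 0 ≤ t) (c : Fin N → ℝ) :
    0 ≤ ∑ n, ∑ m, c n * c m * Real.exp (-(t * d (p n) (p m))) := by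
  match N with
  | 0 => simp
  | Nat.succ N =>
    set b : Fin (N+1) → Fin (N+1) → ℝ := fun n m =>
      t * d (p n) (p 0) + t * d (p m) (p 0) - t * d (p n) (p m) with hbdef
    have hbsymm : ∀ n m, b n m = b m n := by
      intro n m; simp only [hbdef]; rw [hsymm (p n) (p m)]; ring
    have hb : ∀ c' : Fin (N+1) → ℝ, 0 ≤ ∑ n, ∑ m, c' n * c' m * b n m := by
      intro c'
      set s := ∑ n, c' n with hs
      set T := ∑ n, c' n * d (p n) (p 0) with hT
      set γ : Fin (N+1) → ℝ := fun n => c' n - (if n = 0 then s else 0) with hγ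
      have hγsum : ∑ n, γ n = 0 := by
        simp only [hγ, Finset.sum_sub_distrib, Finset.sum_ite_eq', Finset.mem_univ, if_true]
        rw [← hs]; ring
      have hneg := hnd (N+1) p γ hγsum
      have key : ∀ n m : Fin (N+1), γ n * γ m * d (p n) (p m)
          = c' n * c' m * d (p n) (p m)
            - (if m = 0 then s * (c' n * d (p n) (p m)) else 0)
            - (if n = 0 then s * (c' m * d (p n) (p m)) else 0)
            + (if n = 0 then (if m = 0 then s * s * d (p n) (p m) else 0) else 0) := by
        intro n m; simp only [hγ]; split_ifs <;> ring
      have P2 : ∑ n, ∑ m, (if m = 0 then s * (c' n * d (p n) (p m)) else 0) = s * T := by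
        have h1 : ∀ n : Fin (N+1), ∑ m, (if m = 0 then s * (c' n * d (p n) (p m)) else 0)
            = s * (c' n * d (p n) (p 0)) := fun n => by
          rw [Finset.sum_ite_eq' Finset.univ (0 : Fin (N+1))
            (fun m => s * (c' n * d (p n) (p m)))]
          simp
        simp_rw [h1]
        rw [hT, Finset.mul_sum]
      have P3 : ∑ n, ∑ m, (if n = 0 then s * (c' m * d (p n) (p m)) else 0) = s * T := by
        have h1 : ∀ n : Fin (N+1), ∑ m, (if n = 0 then s * (c' m * d (p n) (p m)) else 0)
            = if n = 0 then ∑ m, s * (c' m * d (p n) (p m)) else 0 := fun n => by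
          split_ifs <;> simp
        simp_rw [h1]
        rw [Finset.sum_ite_eq' Finset.univ (0 : Fin (N+1))]
        simp only [Finset.mem_univ, if_true]
        rw [hT, Finset.mul_sum]
        exact Finset.sum_congr rfl fun m _ => by rw [hsymm]
      have P4 : ∑ n : Fin (N+1), ∑ m,
          (if n = 0 then (if m = 0 then s * s * d (p n) (p m) else 0) else 0) = 0 := by
        have h1 : ∀ n : Fin (N+1), ∑ m,
            (if n = 0 then (if m = 0 then s * s * d (p n) (p m) else 0) else 0)
            = if n = 0 then s * s * d (p n) (p 0) else 0 := fun n => by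
          split_ifs with h
          · rw [Finset.sum_ite_eq' Finset.univ (0 : Fin (N+1))]; simp
          · simp
        simp_rw [h1]
        rw [Finset.sum_ite_eq' Finset.univ (0 : Fin (N+1))]
        simp [hdiag]
      have expand : ∑ n, ∑ m, γ n * γ m * d (p n) (p m)
          = (∑ n, ∑ m, c' n * c' m * d (p n) (p m)) - 2 * (s * T) := by
        calc ∑ n, ∑ m, γ n * γ m * d (p n) (p m)
            = ∑ n, ∑ m, (c' n * c' m * d (p n) (p m)
              - (if m = 0 then s * (c' n * d (p n) (p m)) else 0)
              - (if n = 0 then s * (c' m * d (p n) (p m)) else 0)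
              + (if n = 0 then (if m = 0 then s * s * d (p n) (p m) else 0) else 0)) :=
              Finset.sum_congr rfl fun n _ => Finset.sum_congr rfl fun m _ => key n m
          _ = (∑ n, ∑ m, c' n * c' m * d (p n) (p m)) - 2 * (s * T) := by
              simp only [Finset.sum_sub_distrib, Finset.sum_add_distrib]
              rw [P2, P3, P4]
              ring
      have hS : ∑ n, ∑ m, c' n * c' m * d (p n) (p m) ≤ 2 * (s * T) := by linarith
      have hA : ∑ n, ∑ m, c' n * c' m * (t * d (p n) (p 0)) = t * (s * T) := by
        have h1 : ∀ n : Fin (N+1), ∑ m, c' n * c' m * (t * d (p n) (p 0))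
            = (c' n * (t * d (p n) (p 0))) * s := fun n => by
          rw [hs, Finset.mul_sum]
          exact Finset.sum_congr rfl fun m _ => by ring
        simp_rw [h1]
        rw [hT, Finset.mul_sum, Finset.mul_sum]
        exact Finset.sum_congr rfl fun n _ => by ring
      have hB : ∑ n, ∑ m, c' n * c' m * (t * d (p m) (p 0)) = t * (s * T) := by
        rw [Finset.sum_comm]
        rw [← hA]
        exact Finset.sum_congr rfl fun m _ => Finset.sum_congr rfl fun n _ => by ring
      have expand2 : ∑ n, ∑ m, c' n * c' m * b n m
          = t * (2 * (s * T) - ∑ n, ∑ m, c' n * c' m * d (p n) (p m)) := by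
        have key2 : ∀ n m : Fin (N+1), c' n * c' m * b n m
            = c' n * c' m * (t * d (p n) (p 0)) + c' n * c' m * (t * d (p m) (p 0))
              - t * (c' n * c' m * d (p n) (p m)) := fun n m => by
          simp only [hbdef]; ring
        calc ∑ n, ∑ m, c' n * c' m * b n m
            = ∑ n, ∑ m, (c' n * c' m * (t * d (p n) (p 0))
              + c' n * c' m * (t * d (p m) (p 0))
              - t * (c' n * c' m * d (p n) (p m))) :=
              Finset.sum_congr rfl fun n _ => Finset.sum_congr rfl fun m _ => key2 n m
          _ = t * (2 * (s * T) - ∑ n, ∑ m, c' n * c' m * d (p n) (p m)) := by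
              simp only [Finset.sum_sub_distrib, Finset.sum_add_distrib, ← Finset.mul_sum]
              rw [hA, hB]
              ring
      rw [expand2]
      have : 0 ≤ 2 * (s * T) - ∑ n, ∑ m, c' n * c' m * d (p n) (p m) := by linarith
      positivity
    set u : Fin (N+1) → ℝ := fun n => Real.exp (-(t * d (p n) (p 0))) with hu
    have huu : ∀ c' : Fin (N+1) → ℝ, 0 ≤ ∑ n, ∑ m, c' n * c' m * (u n * u m) := by
      intro c'
      have : ∑ n, ∑ m, c' n * c' m * (u n * u m) = (∑ n, c' n * u n) * (∑ m, c' m * u m) := by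
        rw [Finset.sum_mul]
        refine Finset.sum_congr rfl fun n _ => ?_
        rw [Finset.mul_sum]
        exact Finset.sum_congr rfl fun m _ => by ring
      rw [this]; exact mul_self_nonneg _
    have husymm : ∀ n m : Fin (N+1), u n * u m = u m * u n := fun n m => mul_comm _ _
    have final := qf_hadamard husymm huu (fun c' => qf_exp hbsymm hb c') c
    have eq1 : ∀ n m : Fin (N+1), u n * u m * Real.exp (b n m)
        = Real.exp (-(t * d (p n) (p m))) := by
      intro n m
      simp only [hu, hbdef, ← Real.exp_add]
      congr 1; ring
    calc (0:ℝ) ≤ ∑ n, ∑ m, c n * c m * (u n * u m * Real.exp (b n m)) := final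
      _ = ∑ n, ∑ m, c n * c m * Real.exp (-(t * d (p n) (p m))) := by
          exact Finset.sum_congr rfl fun n _ => Finset.sum_congr rfl fun m _ => by rw [eq1]

end Helpers2

/-- if `d = r²` is negative definite, nonnegative, symmetric and vanishes on
the diagonal, then `r = √d` is also negative definite. -/
theorem sqrt_negDef_of_negDef {P : Type*} (d : P → P → ℝ)
    (hsymm : ∀ p q, d p q = d q p)
    (hnn : ∀ p q, 0 ≤ d p q) (hdiag : ∀ p, d p p = 0)
    (hnd : IsNegDef d) :
    IsNegDef (fun p q => Real.sqrt (d p q)) := by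
  intro N p c hc
  simp only
  have key1 : ∀ n m : Fin N, c n * c m * Real.sqrt (d (p n) (p m)) * Iconst
      = ∫ t in Ioi (0:ℝ),
          c n * c m * ((1 - Real.exp (-(t * d (p n) (p m)))) * t ^ (-(3/2) : ℝ)) := by
    intro n m
    rw [integral_const_mul, scale (hnn _ _)]
    ring
  have hint : ∀ n m : Fin N, Integrable
      (fun t : ℝ => c n * c m * ((1 - Real.exp (-(t * d (p n) (p m)))) * t ^ (-(3/2) : ℝ)))
      (volume.restrict (Ioi 0)) := fun n m => (int_aux (hnn _ _)).const_mul _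
  have key2 : (∑ n, ∑ m, c n * c m * Real.sqrt (d (p n) (p m))) * Iconst
      = ∫ t in Ioi (0:ℝ), ∑ n, ∑ m,
          c n * c m * ((1 - Real.exp (-(t * d (p n) (p m)))) * t ^ (-(3/2) : ℝ)) := by
    calc (∑ n, ∑ m, c n * c m * Real.sqrt (d (p n) (p m))) * Iconst
        = ∑ n, ∑ m, c n * c m * Real.sqrt (d (p n) (p m)) * Iconst := by
          rw [Finset.sum_mul]
          exact Finset.sum_congr rfl fun n _ => by rw [Finset.sum_mul]
      _ = ∑ n, ∑ m, ∫ t in Ioi (0:ℝ),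
            c n * c m * ((1 - Real.exp (-(t * d (p n) (p m)))) * t ^ (-(3/2) : ℝ)) :=
          Finset.sum_congr rfl fun n _ => Finset.sum_congr rfl fun m _ => key1 n m
      _ = ∑ n, ∫ t in Ioi (0:ℝ), ∑ m,
            c n * c m * ((1 - Real.exp (-(t * d (p n) (p m)))) * t ^ (-(3/2) : ℝ)) :=
          Finset.sum_congr rfl fun n _ =>
            (integral_finset_sum Finset.univ fun m _ => hint n m).symm
      _ = ∫ t in Ioi (0:ℝ), ∑ n, ∑ m,
            c n * c m * ((1 - Real.exp (-(t * d (p n) (p m)))) * t ^ (-(3/2) : ℝ)) :=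
          (integral_finset_sum Finset.univ fun n _ =>
            integrable_finset_sum Finset.univ fun m _ => hint n m).symm
  have hneg : ∫ t in Ioi (0:ℝ), ∑ n, ∑ m,
      c n * c m * ((1 - Real.exp (-(t * d (p n) (p m)))) * t ^ (-(3/2) : ℝ)) ≤ 0 := by
    refine integral_nonpos_of_ae ((ae_restrict_iff' measurableSet_Ioi).mpr
      (Filter.Eventually.of_forall fun t ht => ?_))
    have ht0 : (0:ℝ) < t := ht
    have hq := qf_exp_neg_d hsymm hdiag hnd p ht0.le c
    have hrw : ∑ n, ∑ m, c n * c m * ((1 - Real.exp (-(t * d (p n) (p m)))) * t ^ (-(3/2) : ℝ))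
        = ((∑ n, c n) * (∑ m, c m)
            - ∑ n, ∑ m, c n * c m * Real.exp (-(t * d (p n) (p m)))) * t ^ (-(3/2) : ℝ) := by
      rw [Finset.sum_mul, sub_mul, Finset.sum_mul, Finset.sum_mul]
      rw [← Finset.sum_sub_distrib]
      refine Finset.sum_congr rfl fun n _ => ?_
      rw [Finset.mul_sum, Finset.sum_mul, Finset.sum_mul, ← Finset.sum_sub_distrib]
      exact Finset.sum_congr rfl fun m _ => by ring
    simp only [Pi.zero_apply]
    rw [hrw, hc]
    have h1 : (0:ℝ) * (0:ℝ) - ∑ n, ∑ m, c n * c m * Real.exp (-(t * d (p n) (p m))) ≤ 0 := by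
      rw [zero_mul, zero_sub]
      linarith
    have h2 : (0:ℝ) ≤ t ^ (-(3/2) : ℝ) := Real.rpow_nonneg ht0.le _
    exact mul_nonpos_iff.mpr (Or.inr ⟨h1, h2⟩)
  rw [← key2] at hneg
  have := Iconst_pos
  nlinarith
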